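/- Let z ∈ H and α ≥ β > 0. With e(z, λ) = z − P_C(z − λF(z)), one has ‖e(z, β)‖ ≤ ‖e(z, α)‖, i.e., the residual norm is nondecreasing in the stepsize. -/
import Mathlib

open scoped RealInnerProductSpace

lemma vi_of_min {H : Type*} [NormedAddCommGroup H] [InnerProductSpace ℝ H]
    {C : Set H} (hC : Convex ℝ C) (x p : H) (hp : p ∈ C)
    (hmin : ∀ u ∈ C, ‖x - p‖ ≤ ‖x - u‖) : ∀ u ∈ C, ⟪x - p, u - p⟫ ≤ 0 := by
  haveI : Nonempty C := ⟨⟨p, hp⟩⟩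
  have heq : ‖x - p‖ = ⨅ w : C, ‖x - w‖ := by
    refine le_antisymm (le_ciInf fun w => hmin w w.2) ?_
    exact ciInf_le ⟨0, by rintro _ ⟨w, rfl⟩; positivity⟩ (⟨p, hp⟩ : C)
  exact (norm_eq_iInf_iff_real_inner_le_zero hC hp).mp heq

/-- Let `z ∈ H` and `α ≥ β > 0`. With `e(z, λ) = z - P_C (z - λ F z)`, one has
`‖e(z, β)‖ ≤ ‖e(z, α)‖`: the residual norm is nondecreasing in the stepsize. -/
theorem stmt_10 {H : Type*} [NormedAddCommGroup H] [InnerProductSpace ℝ H] [CompleteSpace H]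
    (C : Set H) (hCne : C.Nonempty) (hCc : IsClosed C) (hC : Convex ℝ C)
    (F : H → H) (z : H) (α β : ℝ) (hβ : 0 < β) (hαβ : β ≤ α)
    (zα zβ : H)
    (hzα : zα ∈ C) (hzαproj : ∀ u ∈ C, ‖z - α • F z - zα‖ ≤ ‖z - α • F z - u‖)
    (hzβ : zβ ∈ C) (hzβproj : ∀ u ∈ C, ‖z - β • F z - zβ‖ ≤ ‖z - β • F z - u‖) :
    ‖z - zβ‖ ≤ ‖z - zα‖ := by
  have hα : (0:ℝ) < α := hβ.trans_le hαβ
  have h1 := vi_of_min hC _ _ hzα hzαproj zβ hzβ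
  have h2 := vi_of_min hC _ _ hzβ hzβproj zα hzα
  set eα := z - zα with heα
  set eβ := z - zβ with heβ
  have hab : zβ - zα = eα - eβ := by rw [heα, heβ]; abel
  have hba : zα - zβ = eβ - eα := by rw [heα, heβ]; abel
  have h1' : ⟪eα - α • F z, eα - eβ⟫ ≤ 0 := by
    have h : z - α • F z - zα = eα - α • F z := by rw [heα]; abel
    rwa [h, hab] at h1
  have h2' : ⟪eβ - β • F z, eβ - eα⟫ ≤ 0 := by
    have h : z - β • F z - zβ = eβ - β • F z := by rw [heβ]; abel
    rwa [h, hba] at h2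
  simp only [inner_sub_left, inner_sub_right, real_inner_smul_left] at h1' h2'
  rw [real_inner_self_eq_norm_sq] at h1'
  rw [real_inner_self_eq_norm_sq, real_inner_comm eα eβ] at h2'
  set t : ℝ := ⟪F z, eα⟫ - ⟪F z, eβ⟫ with ht
  set c : ℝ := ⟪eα, eβ⟫ with hc
  have e1 : ‖eα‖ ^ 2 - c ≤ α * t := by simp only [ht, hc]; linarith
  have e2 : β * t ≤ c - ‖eβ‖ ^ 2 := by simp only [ht, hc]; linarith
  have cs : c ≤ ‖eα‖ * ‖eβ‖ := real_inner_le_norm eα eβ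
  have hna : 0 ≤ ‖eα‖ := norm_nonneg _
  have hnb : 0 ≤ ‖eβ‖ := norm_nonneg _
  have key : β * ‖eα‖ ^ 2 + α * ‖eβ‖ ^ 2 ≤ (α + β) * (‖eα‖ * ‖eβ‖) := by
    nlinarith [mul_le_mul_of_nonneg_left e1 hβ.le, mul_le_mul_of_nonneg_left e2 hα.le,
      mul_le_mul_of_nonneg_left cs (by linarith : (0:ℝ) ≤ α + β)]
  by_contra hcon
  push_neg at hcon
  have hpos : 0 < α * ‖eβ‖ - β * ‖eα‖ := by nlinarith
  nlinarith [mul_pos (sub_pos.2 hcon) hpos]
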